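/- Let f: [0,∞) → ℝ be continuous with support contained in [0,1], and let Λ > 0. Define R_0^Λ(x) = (Λ³/(8π²)) f(|x|²Λ²) + (1/(8π²))·(Λ³ if |x| ≤ 1/Λ, |x|^{−3} if |x| > 1/Λ). Then ∫_{B_{1/σ}} (R_0^Λ(x))² dx = Λ·α₀(f) − σ/(3·8π²), where α₀(f) = ∫_{ℝ⁵} (R_0^1(x))² dx and 0 < σ ≤ Λ. -/

import Mathlib

open MeasureTheory Real Pointwise

/-- The deformed (cutoff-regularized) Green's function
`R₀^Λ(x) = (Λ³/(8π²)) f(|x|²Λ²) + (1/(8π²)) (Λ³ if |x| ≤ 1/Λ, |x|⁻³ otherwise)`. -/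
noncomputable def R0L (f : ℝ → ℝ) (Λ : ℝ) (x : EuclideanSpace ℝ (Fin 5)) : ℝ :=
  (Λ ^ 3 / (8 * π ^ 2)) * f (‖x‖ ^ 2 * Λ ^ 2) +
    (1 / (8 * π ^ 2)) * (if ‖x‖ ≤ 1 / Λ then Λ ^ 3 else ‖x‖⁻¹ ^ 3)

local notation "E5" => EuclideanSpace ℝ (Fin 5)

lemma R0L_meas (f : ℝ → ℝ) (hf : Continuous f) (Λ : ℝ) : Measurable (R0L f Λ) := by
  unfold R0L
  apply Measurable.add
  · fun_prop
  · apply Measurable.const_mul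
    apply Measurable.ite (measurableSet_le (by fun_prop) measurable_const) <;> fun_prop

lemma R0L_scale (f : ℝ → ℝ) {Λ : ℝ} (hΛ : 0 < Λ) (x : E5) :
    R0L f Λ x = Λ ^ 3 * R0L f 1 (Λ • x) := by
  have hn : ‖Λ • x‖ = Λ * ‖x‖ := by
    rw [norm_smul, Real.norm_eq_abs, abs_of_pos hΛ]
  unfold R0L
  rw [hn]
  have hiff : Λ * ‖x‖ ≤ 1 / 1 ↔ ‖x‖ ≤ 1 / Λ := by
    rw [le_div_iff₀ hΛ]; norm_num [mul_comm]
  rw [if_congr hiff rfl rfl]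
  have h2 : (Λ * ‖x‖) ^ 2 * 1 ^ 2 = ‖x‖ ^ 2 * Λ ^ 2 := by ring
  rw [h2]
  by_cases h : ‖x‖ ≤ 1 / Λ
  · simp only [if_pos h]; ring
  · simp only [if_neg h]
    have hx : ‖x‖ ≠ 0 := by
      intro h0
      exact h (h0 ▸ by positivity)
    field_simp

section

lemma R0L_tail (f : ℝ → ℝ) (hsupp : Function.support f ⊆ Set.Icc 0 1)
    {x : E5} (hx : 1 < ‖x‖) : R0L f 1 x = (1 / (8 * π ^ 2)) * ‖x‖⁻¹ ^ 3 := by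
  have hf0 : f (‖x‖ ^ 2 * 1 ^ 2) = 0 := by
    apply Function.notMem_support.mp
    intro hmem
    have := hsupp hmem
    simp only [Set.mem_Icc] at this
    nlinarith [this.2]
  rw [R0L, hf0, if_neg (by simpa using not_le.mpr hx)]
  ring

end

lemma R0L_tail_sq {f : ℝ → ℝ} (hsupp : Function.support f ⊆ Set.Icc 0 1)
    {x : E5} (hx : 1 < ‖x‖) :
    (R0L f 1 x) ^ 2 = (1 / (8 * π ^ 2)) ^ 2 * ‖x‖ ^ (-(6:ℝ)) := by
  rw [R0L_tail f hsupp hx, mul_pow]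
  congr 1
  have h0 : (0:ℝ) < ‖x‖ := by linarith
  rw [Real.rpow_neg h0.le]
  rw [show ((6:ℝ)) = ((6:ℕ):ℝ) by norm_num, Real.rpow_natCast]
  rw [← inv_pow, ← pow_mul]

lemma integrableOn_tail {f : ℝ → ℝ} (hf : Continuous f)
    (hsupp : Function.support f ⊆ Set.Icc 0 1) {R : ℝ} (hR : 1 ≤ R) :
    IntegrableOn (fun x => (R0L f 1 x) ^ 2) (Metric.closedBall (0:E5) R)ᶜ := by
  have hmeas : AEStronglyMeasurable (fun x : E5 => (R0L f 1 x) ^ 2)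
      (volume.restrict (Metric.closedBall (0:E5) R)ᶜ) :=
    ((R0L_meas f hf 1).pow_const 2).aestronglyMeasurable
  have hint : Integrable (fun x : E5 =>
      (2:ℝ)^6 * (1/(8*π^2))^2 * (1 + ‖x‖) ^ (-(6:ℝ))) := by
    apply Integrable.const_mul
    apply integrable_one_add_norm (E := E5)
    rw [finrank_euclideanSpace]; norm_num
  refine Integrable.mono' hint.integrableOn hmeas ?_
  rw [ae_restrict_iff' measurableSet_closedBall.compl]
  filter_upwards with x hx
  simp only [Set.mem_compl_iff, Metric.mem_closedBall, dist_zero_right, not_le] at hx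
  have hx1 : 1 < ‖x‖ := lt_of_le_of_lt hR hx
  have h0 : (0:ℝ) < ‖x‖ := by linarith
  rw [R0L_tail_sq hsupp hx1]
  rw [Real.norm_eq_abs, abs_of_nonneg (by positivity)]
  have hrw : ∀ t : ℝ, 0 < t → t ^ (-(6:ℝ)) = (t ^ (6:ℕ))⁻¹ := by
    intro t ht
    rw [Real.rpow_neg ht.le, show ((6:ℝ)) = ((6:ℕ):ℝ) by norm_num, Real.rpow_natCast]
  rw [hrw _ h0, hrw _ (by positivity)]
  have hle : (1 + ‖x‖) ^ (6:ℕ) ≤ (2 * ‖x‖) ^ (6:ℕ) :=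
    pow_le_pow_left₀ (by positivity) (by linarith) 6
  have hinv : ((2 * ‖x‖) ^ (6:ℕ))⁻¹ ≤ ((1 + ‖x‖) ^ (6:ℕ))⁻¹ := by
    apply inv_anti₀ (by positivity) hle
  calc (1 / (8 * π ^ 2)) ^ 2 * (‖x‖ ^ (6:ℕ))⁻¹
      = 2 ^ 6 * (1 / (8 * π ^ 2)) ^ 2 * ((2 * ‖x‖) ^ (6:ℕ))⁻¹ := by
        rw [mul_pow]; field_simp
    _ ≤ 2 ^ 6 * (1 / (8 * π ^ 2)) ^ 2 * ((1 + ‖x‖) ^ (6:ℕ))⁻¹ := by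
        apply mul_le_mul_of_nonneg_left hinv (by positivity)

lemma integrable_R0L_one_sq {f : ℝ → ℝ} (hf : Continuous f)
    (hsupp : Function.support f ⊆ Set.Icc 0 1) :
    Integrable (fun x : E5 => (R0L f 1 x) ^ 2) := by
  rw [← integrableOn_univ, ← Set.union_compl_self (Metric.closedBall (0:E5) 1)]
  apply IntegrableOn.union ?_ (integrableOn_tail hf hsupp le_rfl)
  have hcont : ContinuousOn (fun x : E5 =>
      ((1 ^ 3 / (8 * π ^ 2)) * f (‖x‖ ^ 2 * 1 ^ 2) + (1 / (8 * π ^ 2)) * 1 ^ 3) ^ 2)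
      (Metric.closedBall (0:E5) 1) := by fun_prop
  apply (hcont.integrableOn_compact (isCompact_closedBall _ _)).congr_fun ?_
    measurableSet_closedBall
  intro x hx
  simp only [Metric.mem_closedBall, dist_zero_right] at hx
  unfold R0L
  beta_reduce
  rw [if_pos (show ‖x‖ ≤ 1/1 by simpa using hx)]

lemma gamma72 : Real.Gamma ((5:ℝ)/2 + 1) = 15/8 * √π := by
  have h1 : Real.Gamma ((1:ℝ)/2) = √π := Real.Gamma_one_half_eq
  have h2 : Real.Gamma ((3:ℝ)/2) = 1/2 * √π := by
    rw [show (3:ℝ)/2 = 1/2 + 1 by norm_num, Real.Gamma_add_one (by norm_num), h1]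
  have h3 : Real.Gamma ((5:ℝ)/2) = 3/2 * (1/2 * √π) := by
    rw [show (5:ℝ)/2 = 3/2 + 1 by norm_num, Real.Gamma_add_one (by norm_num), h2]
  rw [Real.Gamma_add_one (by norm_num), h3]
  ring

lemma vol_unit_ball : (volume (Metric.ball (0:E5) 1)).toReal = 8 * π ^ 2 / 15 := by
  rw [EuclideanSpace.volume_ball]
  simp only [Fintype.card_fin]
  rw [show ((5:ℕ):ℝ)/2 + 1 = (5:ℝ)/2 + 1 by norm_num]
  rw [gamma72]
  rw [ENNReal.ofReal_one, one_pow, one_mul, ENNReal.toReal_ofReal (by positivity)]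
  have h : √π ^ 5 = π ^ 2 * √π := by
    have : √π ^ 2 = π := Real.sq_sqrt pi_pos.le
    calc √π ^ 5 = (√π ^ 2) ^ 2 * √π := by ring
    _ = π ^ 2 * √π := by rw [this]
  rw [h]
  have hs : √π ≠ 0 := by positivity
  field_simp

lemma tail_integral {f : ℝ → ℝ} (hf : Continuous f)
    (hsupp : Function.support f ⊆ Set.Icc 0 1) {R : ℝ} (hR : 1 ≤ R) :
    ∫ x in (Metric.closedBall (0:E5) R)ᶜ, (R0L f 1 x) ^ 2
      = 1 / (3 * (8 * π ^ 2)) * R⁻¹ := by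
  have hR0 : (0:ℝ) < R := lt_of_lt_of_le one_pos hR
  set G : ℝ → ℝ := fun r => if R < r then (1/(8*π^2))^2 * r ^ (-(6:ℝ)) else 0 with hG
  have key : ∀ x : E5,
      Set.indicator (Metric.closedBall (0:E5) R)ᶜ (fun x => (R0L f 1 x) ^ 2) x = G ‖x‖ := by
    intro x
    by_cases hx : R < ‖x‖
    · rw [Set.indicator_of_mem (by simpa [Metric.mem_closedBall] using hx),
        hG]
      simp only [if_pos hx]
      exact R0L_tail_sq hsupp (lt_of_le_of_lt hR hx)
    · rw [Set.indicator_of_notMem (by simpa [Metric.mem_closedBall] using hx), hG]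
      simp [if_neg hx]
  rw [← integral_indicator measurableSet_closedBall.compl]
  calc (∫ x : E5, Set.indicator (Metric.closedBall (0:E5) R)ᶜ (fun x => (R0L f 1 x) ^ 2) x)
      = ∫ x : E5, G ‖x‖ := by exact integral_congr_ae (Filter.Eventually.of_forall key)
    _ = Module.finrank ℝ E5 • (volume (Metric.ball (0:E5) 1)).toReal •
          ∫ y in Set.Ioi (0:ℝ), y ^ (Module.finrank ℝ E5 - 1) • G y :=
        MeasureTheory.integral_fun_norm_addHaar volume G
    _ = 1 / (3 * (8 * π ^ 2)) * R⁻¹ := by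
      rw [finrank_euclideanSpace_fin, vol_unit_ball]
      have hind : (fun y : ℝ => y ^ (5 - 1) • G y)
          = Set.indicator (Set.Ioi R) (fun y => (1/(8*π^2))^2 * y ^ (-(2:ℝ))) := by
        funext y
        by_cases hy : R < y
        · have hy0 : (0:ℝ) < y := lt_of_lt_of_le hR0 hy.le
          rw [Set.indicator_of_mem (Set.mem_Ioi.mpr hy), hG]
          simp only [if_pos hy, smul_eq_mul]
          have h6 : y ^ (-(6:ℝ)) = y ^ (-(2:ℝ)) * (y ^ (4:ℕ))⁻¹ := by
            rw [← Real.rpow_natCast y 4, ← Real.rpow_neg hy0.le, ← Real.rpow_add hy0]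
            norm_num
          rw [h6]
          have hy4 : y ^ (4:ℕ) ≠ 0 := by positivity
          show y ^ (5-1) * _ = _
          norm_num
          field_simp
        · rw [Set.indicator_of_notMem (by simpa using hy), hG]
          simp [if_neg hy]
      rw [hind]
      rw [setIntegral_indicator measurableSet_Ioi]
      rw [show Set.Ioi (0:ℝ) ∩ Set.Ioi R = Set.Ioi R by
        rw [Set.Ioi_inter_Ioi, max_eq_right hR0.le]]
      rw [MeasureTheory.integral_const_mul]
      rw [integral_Ioi_rpow_of_lt (by norm_num) hR0]
      rw [show (-2:ℝ) + 1 = -1 by norm_num, Real.rpow_neg_one]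
      rw [nsmul_eq_mul, smul_eq_mul]
      have hπ : π ≠ 0 := pi_ne_zero
      field_simp
      ring

/-- `∫_{B_{1/σ}} (R₀^Λ(x))² dx = Λ α₀(f) − σ/(3·8π²)` for `0 < σ ≤ Λ`, where
`α₀(f) = ∫_{ℝ⁵} (R₀^1(x))² dx`. -/
theorem stmt6 (f : ℝ → ℝ) (hf : Continuous f) (hsupp : Function.support f ⊆ Set.Icc 0 1)
    (σ Λ : ℝ) (hσ : 0 < σ) (hσΛ : σ ≤ Λ) :
    ∫ x in Metric.closedBall (0 : EuclideanSpace ℝ (Fin 5)) (1 / σ), (R0L f Λ x) ^ 2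
      = Λ * (∫ x, (R0L f 1 x) ^ 2) - σ / (3 * (8 * π ^ 2)) := by
  have hΛ : 0 < Λ := lt_of_lt_of_le hσ hσΛ
  have hint := integrable_R0L_one_sq hf hsupp
  have hR1 : 1 ≤ Λ / σ := (one_le_div hσ).mpr hσΛ
  have hsmulset : Λ • Metric.closedBall (0:E5) (1/σ) = Metric.closedBall (0:E5) (Λ/σ) := by
    rw [smul_closedBall _ _ (by positivity : (0:ℝ) ≤ 1/σ), smul_zero,
      Real.norm_eq_abs, abs_of_pos hΛ]
    congr 1
    field_simp
  have hsplit : ∫ x in Metric.closedBall (0:E5) (Λ/σ), (R0L f 1 x) ^ 2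
      = (∫ x, (R0L f 1 x)^2) - 1 / (3 * (8 * π ^ 2)) * (Λ/σ)⁻¹ := by
    have := integral_add_compl (measurableSet_closedBall
      (x := (0:E5)) (ε := Λ/σ)) hint
    rw [tail_integral hf hsupp hR1] at this
    linarith
  calc ∫ x in Metric.closedBall (0:E5) (1/σ), (R0L f Λ x) ^ 2
      = ∫ x in Metric.closedBall (0:E5) (1/σ),
          Λ^6 * (fun y => (R0L f 1 y)^2) (Λ • x) := by
        apply setIntegral_congr_fun measurableSet_closedBall
        intro x _
        beta_reduce
        rw [R0L_scale f hΛ x]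
        ring
    _ = Λ^6 * ∫ x in Metric.closedBall (0:E5) (1/σ), (fun y => (R0L f 1 y)^2) (Λ • x) :=
        integral_const_mul _ _
    _ = Λ^6 * ((Λ ^ Module.finrank ℝ E5)⁻¹ •
          ∫ x in Λ • Metric.closedBall (0:E5) (1/σ), (R0L f 1 x)^2) := by
        congr 1
        exact Measure.setIntegral_comp_smul_of_pos volume (fun y => (R0L f 1 y)^2)
          (Metric.closedBall (0:E5) (1/σ)) hΛ
    _ = Λ * (∫ x, (R0L f 1 x) ^ 2) - σ / (3 * (8 * π ^ 2)) := by
        rw [hsmulset, hsplit, finrank_euclideanSpace_fin, smul_eq_mul]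
        have hπ : π ≠ 0 := pi_ne_zero
        field_simp
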